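/- Let 𝔫₂ be a real vector space with basis v₁, ..., v_{𝔡−1} and suppose δv₁, ..., δv_{𝔡−1} are linearly independent elements of Λ²𝔫₁*. For a subset I ⊆ {1,...,𝔡−1} of size k−1 set v_I = ⋀_{i∈I} v_i. Then the map v_I ↦ Σ_{i∈I} ± δv_i ⊗ v_{I∖{i}} is injective on Λ^{k−1}𝔫₂*, i.e., δ is injective on Λ^{k−1}𝔫₂* for 2 ≤ k ≤ 𝔡. -/

import Mathlib

/-- Let `𝔫₂*` have basis `v₁, …, v_{𝔡−1}` and suppose the 2-forms
`δv₁, …, δv_{𝔡−1}` (here `w i ∈ E := Λ²𝔫₁*`) are linearly independent. In the basis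
`(v_I)` of `Λ^{k−1}𝔫₂*` indexed by `(k−1)`-subsets `I`, the Chevalley–Eilenberg
differential sends `v_I` to `∑_{i∈I} ± δv_i ⊗ v_{I∖{i}}`; this map is injective on
`Λ^{k−1}𝔫₂*` for `2 ≤ k ≤ 𝔡`: if the element with coordinates `c` is sent to `0`
(i.e. for every `(k−2)`-subset `J` the coefficient of `v_J`, namely
`∑_{i∉J} (−1)^{#{j∈J | j<i}} c(J∪{i}) δv_i`, vanishes), then all coordinates `c I`
with `#I = k−1` vanish. -/
theorem stmt11 (E : Type*) [AddCommGroup E] [Module ℝ E]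
    (d k : ℕ) (hk2 : 2 ≤ k) (hkd : k ≤ d)
    (w : Fin (d - 1) → E) (hw : LinearIndependent ℝ w)
    (c : Finset (Fin (d - 1)) → ℝ)
    (hδ : ∀ J : Finset (Fin (d - 1)), J.card = k - 2 →
      ∑ i ∈ Jᶜ,
        ((-1 : ℝ) ^ (J.filter (fun j => j < i)).card * c (insert i J)) • w i = 0) :
    ∀ I : Finset (Fin (d - 1)), I.card = k - 1 → c I = 0 := by
  intro I hI
  have hne : I.Nonempty := by
    rw [← Finset.card_pos, hI]; omega
  obtain ⟨i, hi⟩ := hne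
  set J := I.erase i with hJ
  have hJcard : J.card = k - 2 := by
    rw [hJ, Finset.card_erase_of_mem hi, hI]; omega
  have hiJ : i ∈ Jᶜ := by simp [hJ]
  have h := hδ J hJcard
  have hcoef := linearIndependent_iff'.mp hw Jᶜ
    (fun i => (-1 : ℝ) ^ (J.filter (fun j => j < i)).card * c (insert i J)) h i hiJ
  have hins : insert i J = I := Finset.insert_erase hi
  simp only [hins] at hcoef
  have hpow : ((-1 : ℝ) ^ (J.filter (fun j => j < i)).card) ≠ 0 := by
    positivity
  exact (mul_eq_zero.mp hcoef).resolve_left hpow
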